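/- Let l₁,…,l_k : ℝⁿ → ℝ be affine functions (degree-1 polynomials) and let f : ℝⁿ → ℝ be f(x) = ∏_{i=1}^k l_i(x). Then the set of critical values of f, namely {f(x) : x ∈ ℝⁿ and the derivative Df(x) = 0}, is a finite set. -/

import Mathlib

open Finset Set

lemma prodDeriv {k : ℕ} (α β : Fin k → ℝ) (t : ℝ) :
    HasDerivAt (fun t => ∏ i, (α i * t + β i))
      (∑ i, (∏ j ∈ Finset.univ.erase i, (α j * t + β j)) • α i) t :=
  HasDerivAt.fun_finsetProd fun i _ => by
    simpa using ((hasDerivAt_id t).const_mul (α i)).add_const (β i)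

lemma key1 {k : ℕ} (α β : Fin k → ℝ)
    (hne : ∀ t ∈ Icc (0:ℝ) 1, ∀ i, α i * t + β i ≠ 0)
    (h0 : ∑ i, (∏ j ∈ Finset.univ.erase i, (α j * 0 + β j)) • α i = 0)
    (h1 : ∑ i, (∏ j ∈ Finset.univ.erase i, (α j * 1 + β j)) • α i = 0) :
    ∏ i, (α i * 1 + β i) = ∏ i, (α i * 0 + β i) := by
  set φ : ℝ → ℝ := fun t => ∑ i, α i / (α i * t + β i) with hφ
  -- derivative of φ
  have hφd : ∀ t ∈ Icc (0:ℝ) 1, HasDerivAt φ (∑ i, -(α i ^ 2) / (α i * t + β i) ^ 2) t := by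
    intro t ht
    apply HasDerivAt.fun_sum
    intro i _
    have hd : HasDerivAt (fun t => α i * t + β i) (α i) t := by
      simpa using ((hasDerivAt_id t).const_mul (α i)).add_const (β i)
    have := (hd.inv (hne t ht i)).const_mul (α i)
    convert this using 1
    · rfl
    · funext y; simp [div_eq_mul_inv]
    · ring
  -- φ is antitone on Icc
  have hφmono : AntitoneOn φ (Icc (0:ℝ) 1) := by
    apply antitoneOn_of_deriv_nonpos (convex_Icc 0 1)
    · intro t ht
      exact (hφd t ht).continuousAt.continuousWithinAt
    · intro t ht
      rw [interior_Icc] at ht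
      exact ((hφd t (Ioo_subset_Icc_self ht)).differentiableAt).differentiableWithinAt
    · intro t ht
      rw [interior_Icc] at ht
      rw [(hφd t (Ioo_subset_Icc_self ht)).deriv]
      apply Finset.sum_nonpos
      intro i _
      apply div_nonpos_of_nonpos_of_nonneg
      · simpa using sq_nonneg (α i)
      · positivity
  -- relation between φ and the sums h0 h1
  have hrel : ∀ t ∈ Icc (0:ℝ) 1,
      (∑ i, (∏ j ∈ Finset.univ.erase i, (α j * t + β j)) • α i)
        = (∏ i, (α i * t + β i)) * φ t := by
    intro t ht
    rw [hφ, Finset.mul_sum]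
    apply Finset.sum_congr rfl
    intro i _
    have hi := hne t ht i
    rw [smul_eq_mul, ← Finset.mul_prod_erase Finset.univ _ (Finset.mem_univ i)]
    rw [mul_comm (α i * t + β i), mul_assoc, mul_div_cancel₀ _ hi]
  have hprod0 : (∏ i, (α i * 0 + β i)) ≠ 0 := Finset.prod_ne_zero_iff.2 fun i _ => hne 0 (by norm_num) i
  have hprod1 : (∏ i, (α i * 1 + β i)) ≠ 0 := Finset.prod_ne_zero_iff.2 fun i _ => hne 1 (by norm_num) i
  have hφ0 : φ 0 = 0 := by
    have := hrel 0 (by norm_num)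
    rw [h0] at this
    exact (mul_eq_zero.1 this.symm).resolve_left hprod0
  have hφ1 : φ 1 = 0 := by
    have := hrel 1 (by norm_num)
    rw [h1] at this
    exact (mul_eq_zero.1 this.symm).resolve_left hprod1
  have hφzero : ∀ t ∈ Icc (0:ℝ) 1, φ t = 0 := by
    intro t ht
    have h1' := hφmono ht (by norm_num : (1:ℝ) ∈ Icc (0:ℝ) 1) ht.2
    have h2' := hφmono (by norm_num : (0:ℝ) ∈ Icc (0:ℝ) 1) ht ht.1
    rw [hφ0] at h2'; rw [hφ1] at h1'
    linarith
  -- h has zero derivative on Icc, hence constant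
  set h : ℝ → ℝ := fun t => ∏ i, (α i * t + β i) with hh
  have hd0 : ∀ t ∈ interior (Icc (0:ℝ) 1), deriv h t = 0 := by
    intro t ht
    rw [interior_Icc] at ht
    have ht' := Ioo_subset_Icc_self ht
    rw [(prodDeriv α β t).deriv, hrel t ht', hφzero t ht', mul_zero]
  have hcont : ContinuousOn h (Icc (0:ℝ) 1) := fun t _ => (prodDeriv α β t).continuousAt.continuousWithinAt
  have hdiff : DifferentiableOn ℝ h (interior (Icc (0:ℝ) 1)) := fun t ht =>
    (prodDeriv α β t).differentiableAt.differentiableWithinAt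
  have hm : MonotoneOn h (Icc (0:ℝ) 1) :=
    monotoneOn_of_deriv_nonneg (convex_Icc 0 1) hcont hdiff (fun t ht => (hd0 t ht).ge)
  have ha : AntitoneOn h (Icc (0:ℝ) 1) :=
    antitoneOn_of_deriv_nonpos (convex_Icc 0 1) hcont hdiff (fun t ht => (hd0 t ht).le)
  have h01 : (0:ℝ) ∈ Icc (0:ℝ) 1 := by norm_num
  have h11 : (1:ℝ) ∈ Icc (0:ℝ) 1 := by norm_num
  exact le_antisymm (ha h01 h11 zero_le_one) (hm h01 h11 zero_le_one)

section Main
variable (n k : ℕ) (a : Fin k → (Fin n → ℝ)) (c : Fin k → ℝ)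

noncomputable def F : (Fin n → ℝ) → ℝ := fun x => ∏ i, ((∑ j, a i j * x j) + c i)

def l (i : Fin k) : (Fin n → ℝ) → ℝ := fun x => (∑ j, a i j * x j) + c i

lemma hFdiff : Differentiable ℝ (F n k a c) := by
  have hg : ∀ i, Differentiable ℝ (fun x : Fin n → ℝ => (∑ j, a i j * x j) + c i) := by
    intro i
    apply Differentiable.add_const
    apply Differentiable.fun_sum
    intro j _
    exact (differentiable_pi.mp differentiable_id j).const_mul (a i j)
  intro x
  exact (HasFDerivAt.finset_prod (u := Finset.univ)
    (fun i _ => ((hg i) x).hasFDerivAt)).differentiableAt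

lemma segment_eq (x v : Fin n → ℝ) (t : ℝ) :
    F n k a c (x + t • v) = ∏ i, ((∑ j, a i j * v j) * t + l n k a c i x) := by
  unfold F l
  apply Finset.prod_congr rfl
  intro i _
  have : ∀ j, a i j * (x + t • v) j = a i j * x j + (a i j * v j) * t := by
    intro j; simp [Pi.add_apply, Pi.smul_apply, smul_eq_mul]; ring
  rw [Finset.sum_congr rfl fun j _ => this j, Finset.sum_add_distrib, ← Finset.sum_mul]
  ring

lemma same_value (x y : Fin n → ℝ)
    (hx : fderiv ℝ (F n k a c) x = 0) (hy : fderiv ℝ (F n k a c) y = 0)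
    (hnzx : ∀ i, l n k a c i x ≠ 0) (hnzy : ∀ i, l n k a c i y ≠ 0)
    (hsign : ∀ i, (0 < l n k a c i x ↔ 0 < l n k a c i y)) :
    F n k a c x = F n k a c y := by
  set v : Fin n → ℝ := y - x with hv
  set α : Fin k → ℝ := fun i => ∑ j, a i j * v j with hα
  set β : Fin k → ℝ := fun i => l n k a c i x with hβ
  have hαβ : ∀ i, α i + β i = l n k a c i y := by
    intro i
    simp only [hα, hβ, hv, l, Pi.sub_apply]
    have : ∀ j, a i j * (y j - x j) = a i j * y j - a i j * x j := fun j => by ring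
    rw [Finset.sum_congr rfl fun j _ => this j, Finset.sum_sub_distrib]
    ring
  -- nonvanishing on the segment
  have hne : ∀ t ∈ Icc (0:ℝ) 1, ∀ i, α i * t + β i ≠ 0 := by
    intro t ht i
    have key : α i * t + β i = (1 - t) * β i + t * (l n k a c i y) := by
      rw [← hαβ i]; ring
    rw [key]
    rcases lt_or_gt_of_ne (hnzx i) with hb | hb
    · have hy' : l n k a c i y < 0 := by
        rcases lt_or_gt_of_ne (hnzy i) with h' | h'
        · exact h'
        · exact absurd (hb.trans_le' ((hsign i).2 h').le) (lt_irrefl 0)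
      have : (1 - t) * β i + t * l n k a c i y < 0 := by
        rcases eq_or_lt_of_le ht.1 with h0 | h0
        · simp [← h0]; exact hb
        · nlinarith [ht.2, mul_pos h0 (neg_pos.2 hy')]
      exact this.ne
    · have hy' : 0 < l n k a c i y := (hsign i).1 (by simpa [hβ] using hb)
      have : 0 < (1 - t) * β i + t * l n k a c i y := by
        rcases eq_or_lt_of_le ht.1 with h0 | h0
        · simp [← h0]; exact hb
        · nlinarith [ht.2, mul_pos h0 hy']
      exact this.ne'
  -- derivative conditions
  have hder : ∀ (z : Fin n → ℝ) (t₀ : ℝ), x + t₀ • v = z → fderiv ℝ (F n k a c) z = 0 →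
      ∑ i, (∏ j ∈ Finset.univ.erase i, (α j * t₀ + β j)) • α i = 0 := by
    intro z t₀ hz hcrit
    have hγ : HasDerivAt (fun t : ℝ => x + t • v) v t₀ := by
      simpa using ((hasDerivAt_id t₀).smul_const v).const_add x
    have hcomp : HasDerivAt (fun t : ℝ => F n k a c (x + t • v)) ((fderiv ℝ (F n k a c) z) v) t₀ := by
      subst hz
      exact ((hFdiff n k a c) _).hasFDerivAt.comp_hasDerivAt t₀ hγ
    rw [hcrit] at hcomp
    simp only [ContinuousLinearMap.zero_apply] at hcomp
    have heq : (fun t : ℝ => F n k a c (x + t • v)) = fun t => ∏ i, (α i * t + β i) := by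
      funext t; exact segment_eq n k a c x v t
    rw [heq] at hcomp
    exact (prodDeriv α β t₀).unique hcomp
  have h0 := hder x 0 (by simp) hx
  have h1 := hder y 1 (by simp [hv]) hy
  have := key1 α β hne h0 h1
  have e0 : F n k a c x = ∏ i, (α i * 0 + β i) := by
    simp only [mul_zero, zero_add, hβ]
    unfold F l; rfl
  have e1 : F n k a c y = ∏ i, (α i * 1 + β i) := by
    unfold F
    apply Finset.prod_congr rfl
    intro i _
    rw [mul_one, hαβ i]; rfl
  rw [e0, e1, this]

end Main


/-- Let `l₁, …, l_k : ℝⁿ → ℝ` be affine functions and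
`f x = ∏ i, l i x`. Then the set of critical values of `f` is finite. -/
theorem stmt6 (n k : ℕ) (a : Fin k → (Fin n → ℝ)) (c : Fin k → ℝ)
    (f : (Fin n → ℝ) → ℝ) (hf : ∀ x, f x = ∏ i, ((∑ j, a i j * x j) + c i)) :
    Set.Finite {y : ℝ | ∃ x : Fin n → ℝ, fderiv ℝ f x = 0 ∧ f x = y} := by
  classical
  have hfF : f = F n k a c := funext hf
  subst hfF
  set P : (Fin k → Bool) → (Fin n → ℝ) → Prop := fun σ x =>
    fderiv ℝ (F n k a c) x = 0 ∧ ∀ i, l n k a c i x ≠ 0 ∧ (0 < l n k a c i x ↔ σ i = true)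
    with hP
  set V : (Fin k → Bool) → ℝ := fun σ => if h : ∃ x, P σ x then F n k a c h.choose else 0 with hV
  apply Set.Finite.subset (Set.Finite.insert 0 (Set.finite_range V))
  rintro y ⟨x, hcrit, rfl⟩
  by_cases hz : ∃ i, l n k a c i x = 0
  · left
    obtain ⟨i, hi⟩ := hz
    exact Finset.prod_eq_zero (Finset.mem_univ i) hi
  · right
    push_neg at hz
    set σ : Fin k → Bool := fun i => decide (0 < l n k a c i x) with hσ
    have hPx : P σ x := ⟨hcrit, fun i => ⟨hz i, by simp [hσ]⟩⟩
    have hex : ∃ x, P σ x := ⟨x, hPx⟩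
    refine ⟨σ, ?_⟩
    rw [hV]
    simp only [dif_pos hex]
    obtain ⟨h1, h2⟩ := hex.choose_spec
    exact same_value n k a c _ x h1 hcrit (fun i => (h2 i).1) (fun i => hz i)
      (fun i => ((h2 i).2).trans (hPx.2 i).2.symm)
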